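/- arXiv:1202.3329 — 2 statements merged into one kernel-verified Lean document; each statement's English description precedes it below -/
import Mathlib

section
/- For self-adjoint matrices A and B of the same size, the sum of their decreasingly ordered eigenvalue vectors majorizes the decreasingly ordered eigenvalue vector of A + B (Ky Fan's theorem): for every k, the sum of the k largest eigenvalues of A + B is at most the sum of the k largest eigenvalues of A plus the sum of the k largest eigenvalues of B, with equality of total traces. -/
open Matrix Finset in
/-- `u` rearranged in decreasing order. -/
noncomputable def sortDesc {n : ℕ} (u : Fin n → ℝ) : Fin n → ℝ :=
  fun i => u (Tuple.sort u i.rev)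

open Finset in
/-- `u` majorizes `v`: every partial sum of the decreasing rearrangement of `u`
dominates that of `v`, and the total sums agree. -/
noncomputable def Majorizes {n : ℕ} (u v : Fin n → ℝ) : Prop :=
  (∀ k : ℕ, ∑ i ∈ Finset.univ.filter (fun i : Fin n => (i : ℕ) < k), sortDesc v i ≤
      ∑ i ∈ Finset.univ.filter (fun i : Fin n => (i : ℕ) < k), sortDesc u i) ∧
  ∑ i, u i = ∑ i, v i

section aux
open Finset

lemma sortDesc_antitone {n : ℕ} (u : Fin n → ℝ) : Antitone (sortDesc u) := by
  intro i j hij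
  have := Tuple.monotone_sort u (Fin.rev_le_rev.2 hij)
  simpa [sortDesc] using this

lemma sortDesc_of_antitone {n : ℕ} {u : Fin n → ℝ} (hu : Antitone u) : sortDesc u = u := by
  have hmono : Monotone (u ∘ (Fin.revPerm : Equiv.Perm (Fin n))) := by
    intro i j hij
    exact hu (Fin.rev_le_rev.2 hij)
  have h := (Tuple.comp_sort_eq_comp_iff_monotone (σ := Fin.revPerm)).2 hmono
  funext i
  have := congrFun h.symm i.rev
  simpa [sortDesc] using this

/-- the key rearrangement inequality: if `0 ≤ t ≤ 1` and `∑ t = #{i < k}`,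
then `∑ w i * t i ≤ ∑_{i<k} w i` for antitone `w`. -/
lemma sum_mul_le_of_antitone {n k : ℕ} {w t : Fin n → ℝ} (hw : Antitone w)
    (ht0 : ∀ i, 0 ≤ t i) (ht1 : ∀ i, t i ≤ 1)
    (hsum : ∑ i, t i = ((Finset.univ.filter (fun i : Fin n => (i : ℕ) < k)).card : ℝ)) :
    ∑ i, w i * t i ≤ ∑ i ∈ Finset.univ.filter (fun i : Fin n => (i : ℕ) < k), w i := by
  rcases Nat.eq_zero_or_pos n with hn | hn
  · subst hn; simp
  set χ : Fin n → ℝ := fun i => if (i : ℕ) < k then 1 else 0 with hχ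
  set μ : ℝ := w ⟨min (k - 1) (n - 1), by omega⟩ with hμ
  have key : ∀ i : Fin n, (w i - μ) * (t i - χ i) ≤ 0 := by
    intro i
    by_cases hik : (i : ℕ) < k
    · have h1 : μ ≤ w i := hw (by simp [Fin.le_def]; omega)
      have h2 : t i - χ i ≤ 0 := by simp [hχ, hik]; linarith [ht1 i]
      exact mul_nonpos_of_nonneg_of_nonpos (by linarith) h2
    · have h1 : w i ≤ μ := hw (by simp [Fin.le_def]; omega)
      have h2 : 0 ≤ t i - χ i := by simp [hχ, hik]; linarith [ht0 i]
      exact mul_nonpos_of_nonpos_of_nonneg (by linarith) h2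
  have hkey : ∑ i, (w i - μ) * (t i - χ i) ≤ 0 :=
    Finset.sum_nonpos fun i _ => key i
  have hχsum : ∑ i, χ i = ((Finset.univ.filter (fun i : Fin n => (i : ℕ) < k)).card : ℝ) := by
    simp [hχ]
  have hwχ : ∑ i, w i * χ i = ∑ i ∈ Finset.univ.filter (fun i : Fin n => (i : ℕ) < k), w i := by
    rw [Finset.sum_filter]
    simp [hχ, mul_ite]
  have expand : ∑ i, (w i - μ) * (t i - χ i)
      = ∑ i, w i * t i - ∑ i, w i * χ i - μ * ∑ i, t i + μ * ∑ i, χ i := by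
    simp only [sub_mul, mul_sub, Finset.sum_sub_distrib, Finset.mul_sum]
    ring
  rw [expand, hsum, hχsum, hwχ] at hkey
  linarith

open Matrix Complex in
/-- spectral decomposition of the diagonal values of `star V * A * V`. -/
lemma exists_weights {n : ℕ} {A : Matrix (Fin n) (Fin n) ℂ} (hA : A.IsHermitian)
    (V : Matrix.unitaryGroup (Fin n) ℂ) (T : Finset (Fin n)) :
    ∃ t : Fin n → ℝ, (∀ j, 0 ≤ t j) ∧ (∀ j, t j ≤ 1) ∧ (∑ j, t j = (T.card : ℝ)) ∧
      ∑ i ∈ T, (star (V : Matrix (Fin n) (Fin n) ℂ) * A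
          * (V : Matrix (Fin n) (Fin n) ℂ)) i i
        = ((∑ j, hA.eigenvalues j * t j : ℝ) : ℂ) := by
  set U : Matrix (Fin n) (Fin n) ℂ := (hA.eigenvectorUnitary : Matrix (Fin n) (Fin n) ℂ) with hU
  set Vm : Matrix (Fin n) (Fin n) ℂ := (V : Matrix (Fin n) (Fin n) ℂ) with hVm
  set W : Matrix (Fin n) (Fin n) ℂ := star U * Vm with hW
  have hUU : U * star U = 1 := (Matrix.mem_unitaryGroup_iff).1 hA.eigenvectorUnitary.2
  have hUU' : star U * U = 1 := (Matrix.mem_unitaryGroup_iff').1 hA.eigenvectorUnitary.2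
  have hVV : Vm * star Vm = 1 := (Matrix.mem_unitaryGroup_iff).1 V.2
  have hVV' : star Vm * Vm = 1 := (Matrix.mem_unitaryGroup_iff').1 V.2
  have hWs : star W = star Vm * U := by rw [hW, StarMul.star_mul, star_star]
  have hWW : W * star W = 1 := by
    rw [hW, hWs, Matrix.mul_assoc, ← Matrix.mul_assoc Vm _ U, hVV, Matrix.one_mul, hUU']
  have hWW' : star W * W = 1 := by
    rw [hW, hWs, Matrix.mul_assoc, ← Matrix.mul_assoc U _ Vm, hUU, Matrix.one_mul, hVV']
  have hrow : ∀ j, ∑ i, Complex.normSq (W j i) = 1 := by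
    intro j
    have h1 : ∑ x, W j x * star (W j x) = 1 := by
      have := congrFun (congrFun hWW j) j
      rw [Matrix.mul_apply] at this
      simpa [Matrix.star_apply, Matrix.one_apply_eq] using this
    have h2 : ∑ x, W j x * star (W j x) = ((∑ i, Complex.normSq (W j i) : ℝ) : ℂ) := by
      push_cast
      exact Finset.sum_congr rfl fun x _ => by
        rw [Complex.star_def, Complex.mul_conj]
    rw [h2] at h1
    exact_mod_cast h1
  have hcol : ∀ i, ∑ j, Complex.normSq (W j i) = 1 := by
    intro i
    have h1 : ∑ x, star (W x i) * W x i = 1 := by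
      have := congrFun (congrFun hWW' i) i
      rw [Matrix.mul_apply] at this
      simpa [Matrix.star_apply, Matrix.one_apply_eq] using this
    have h2 : ∑ x, star (W x i) * W x i = ((∑ j, Complex.normSq (W j i) : ℝ) : ℂ) := by
      push_cast
      exact Finset.sum_congr rfl fun x _ => by
        rw [Complex.star_def, mul_comm, Complex.mul_conj]
    rw [h2] at h1
    exact_mod_cast h1
  refine ⟨fun j => ∑ i ∈ T, Complex.normSq (W j i), ?_, ?_, ?_, ?_⟩
  · exact fun j => Finset.sum_nonneg fun i _ => Complex.normSq_nonneg _
  · intro j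
    calc ∑ i ∈ T, Complex.normSq (W j i) ≤ ∑ i, Complex.normSq (W j i) :=
          Finset.sum_le_sum_of_subset_of_nonneg (Finset.subset_univ T)
            (fun i _ _ => Complex.normSq_nonneg _)
      _ = 1 := hrow j
  · rw [Finset.sum_comm]
    simp [hcol]
  · have hdecomp : star Vm * A * Vm
        = star W * diagonal (RCLike.ofReal ∘ hA.eigenvalues) * W := by
      conv_lhs => rw [hA.spectral_theorem, Unitary.conjStarAlgAut_apply]
      rw [hWs, hW]
      simp only [Matrix.mul_assoc, hU]
    have hco : (RCLike.ofReal : ℝ → ℂ) = Complex.ofReal := rfl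
    have hentry : ∀ i, (star Vm * A * Vm) i i
        = ∑ j, (hA.eigenvalues j : ℂ) * ((Complex.normSq (W j i) : ℝ) : ℂ) := by
      intro i
      rw [hdecomp, Matrix.mul_apply]
      refine Finset.sum_congr rfl fun j _ => ?_
      rw [Matrix.mul_apply]
      rw [Finset.sum_eq_single j (by intro b _ hb; exact mul_eq_zero_of_right _ (Matrix.diagonal_apply_ne _ hb))
        (by simp)]
      simp only [Matrix.star_apply, Matrix.diagonal_apply_eq, Function.comp_apply, hco]
      rw [Complex.star_def, mul_comm ((starRingEnd ℂ) (W j i)) _, mul_assoc,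
        mul_comm ((starRingEnd ℂ) (W j i)) _, Complex.mul_conj]
    rw [Finset.sum_congr rfl fun i _ => hentry i, Finset.sum_comm]
    push_cast
    rw [Finset.sum_congr rfl fun j (_ : j ∈ Finset.univ) => (Finset.mul_sum _ _ _).symm]

open Matrix in
lemma trace_eq_sum_eigenvalues' {n : ℕ} {A : Matrix (Fin n) (Fin n) ℂ} (hA : A.IsHermitian) :
    A.trace = ((∑ i, hA.eigenvalues i : ℝ) : ℂ) := by
  conv_lhs => rw [hA.spectral_theorem, Unitary.conjStarAlgAut_apply]
  rw [Matrix.trace_mul_comm, ← Matrix.mul_assoc,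
    (Matrix.mem_unitaryGroup_iff').1 hA.eigenvectorUnitary.2, Matrix.one_mul, Matrix.trace_diagonal]
  push_cast
  rfl

open Finset in
lemma sum_sortDesc {n : ℕ} (u : Fin n → ℝ) (s : Finset (Fin n)) :
    ∑ i ∈ s, sortDesc u i = ∑ i ∈ s.image (fun i => Tuple.sort u i.rev), u i := by
  rw [Finset.sum_image]
  · rfl
  · intro a _ b _ h
    have := (Tuple.sort u).injective h
    exact Fin.rev_injective this

open Finset in
lemma sum_mul_le_sortDesc {n k : ℕ} (α t : Fin n → ℝ)
    (ht0 : ∀ i, 0 ≤ t i) (ht1 : ∀ i, t i ≤ 1)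
    (hsum : ∑ i, t i = ((Finset.univ.filter (fun i : Fin n => (i : ℕ) < k)).card : ℝ)) :
    ∑ j, α j * t j ≤ ∑ i ∈ Finset.univ.filter (fun i : Fin n => (i : ℕ) < k), sortDesc α i := by
  set π : Equiv.Perm (Fin n) := Fin.revPerm.trans (Tuple.sort α) with hπ
  have hs : ∀ i, sortDesc α i = α (π i) := fun i => rfl
  have h1 : ∑ j, α j * t j = ∑ i, sortDesc α i * t (π i) := by
    rw [← Equiv.sum_comp π (fun j => α j * t j)]
    exact Finset.sum_congr rfl fun i _ => by rw [hs]
  rw [h1]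
  refine sum_mul_le_of_antitone (sortDesc_antitone α) (fun i => ht0 _) (fun i => ht1 _) ?_
  rw [Equiv.sum_comp π t, hsum]

open Matrix in
/-- Ky Fan: for Hermitian matrices `A`, `B`, the (componentwise) sum of the decreasingly
ordered eigenvalue vectors of `A` and `B` majorizes the eigenvalue vector of `A + B`. -/
theorem kyFan_eigenvalue_sum_majorizes {n : ℕ} (A B : Matrix (Fin n) (Fin n) ℂ)
    (hA : A.IsHermitian) (hB : B.IsHermitian) :
    Majorizes (fun i => sortDesc hA.eigenvalues i + sortDesc hB.eigenvalues i)
      ((hA.add hB).eigenvalues) := by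
  set hM := hA.add hB with hhM
  set lam := hM.eigenvalues with hlam
  constructor
  · intro k
    set F := Finset.univ.filter (fun i : Fin n => (i : ℕ) < k) with hF
    set T := F.image (fun i => Tuple.sort lam i.rev) with hT
    have hTcard : T.card = F.card := Finset.card_image_of_injective _ (fun a b h =>
      Fin.rev_injective ((Tuple.sort lam).injective h))
    set V := hM.eigenvectorUnitary with hV
    obtain ⟨tA, htA0, htA1, htAsum, htAeq⟩ := exists_weights hA V T
    obtain ⟨tB, htB0, htB1, htBsum, htBeq⟩ := exists_weights hB V T
    have hdiag : star (V : Matrix (Fin n) (Fin n) ℂ) * (A + B) * (V : Matrix (Fin n) (Fin n) ℂ)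
        = diagonal (RCLike.ofReal ∘ hM.eigenvalues) := by
      rw [← hM.conjStarAlgAut_star_eigenvectorUnitary, Unitary.conjStarAlgAut_star_apply]
    have hsplit : star (V : Matrix (Fin n) (Fin n) ℂ) * (A + B) * V
        = star (V : Matrix (Fin n) (Fin n) ℂ) * A * V
          + star (V : Matrix (Fin n) (Fin n) ℂ) * B * V := by
      rw [Matrix.mul_add, Matrix.add_mul]
    have hmain : ((∑ i ∈ T, lam i : ℝ) : ℂ)
        = ((∑ j, hA.eigenvalues j * tA j : ℝ) : ℂ) + ((∑ j, hB.eigenvalues j * tB j : ℝ) : ℂ) := by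
      rw [← htAeq, ← htBeq, ← Finset.sum_add_distrib]
      push_cast
      refine Finset.sum_congr rfl fun i _ => ?_
      have := congrFun (congrFun hdiag i) i
      have h2 : (star (V : Matrix (Fin n) (Fin n) ℂ) * (A + B) * V) i i = (lam i : ℂ) := by
        rw [this]; simp [hlam]
      rw [← Matrix.add_apply, ← hsplit]
      exact h2.symm
    have hmainR : ∑ i ∈ T, lam i
        = ∑ j, hA.eigenvalues j * tA j + ∑ j, hB.eigenvalues j * tB j := by
      exact_mod_cast hmain
    have hLHS : ∑ i ∈ F, sortDesc lam i = ∑ i ∈ T, lam i := sum_sortDesc lam F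
    have hbA : ∑ j, hA.eigenvalues j * tA j ≤ ∑ i ∈ F, sortDesc hA.eigenvalues i :=
      sum_mul_le_sortDesc _ _ htA0 htA1 (by rw [htAsum, hTcard])
    have hbB : ∑ j, hB.eigenvalues j * tB j ≤ ∑ i ∈ F, sortDesc hB.eigenvalues i :=
      sum_mul_le_sortDesc _ _ htB0 htB1 (by rw [htBsum, hTcard])
    have hanti : Antitone (fun i => sortDesc hA.eigenvalues i + sortDesc hB.eigenvalues i) :=
      fun i j hij => add_le_add (sortDesc_antitone _ hij) (sortDesc_antitone _ hij)
    rw [sortDesc_of_antitone hanti, hLHS, hmainR, Finset.sum_add_distrib]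
    exact add_le_add hbA hbB
  · have htr : ((∑ i, hA.eigenvalues i + ∑ i, hB.eigenvalues i : ℝ) : ℂ)
        = ((∑ i, hM.eigenvalues i : ℝ) : ℂ) := by
      rw [Complex.ofReal_add, ← trace_eq_sum_eigenvalues' hA, ← trace_eq_sum_eigenvalues' hB,
        ← trace_eq_sum_eigenvalues' hM, Matrix.trace_add]
    have htrR : ∑ i, hA.eigenvalues i + ∑ i, hB.eigenvalues i = ∑ i, hM.eigenvalues i := by
      exact_mod_cast htr
    have hsA : ∑ i, sortDesc hA.eigenvalues i = ∑ i, hA.eigenvalues i :=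
      Equiv.sum_comp (Fin.revPerm.trans (Tuple.sort hA.eigenvalues)) hA.eigenvalues
    have hsB : ∑ i, sortDesc hB.eigenvalues i = ∑ i, hB.eigenvalues i :=
      Equiv.sum_comp (Fin.revPerm.trans (Tuple.sort hB.eigenvalues)) hB.eigenvalues
    rw [Finset.sum_add_distrib, hsA, hsB, htrR]

end aux
end

section
/- If λ majorizes μ (vectors in ℝ^n with equal sum), then there exist nonnegative reals p_1,…,p_m summing to 1 and permutation matrices P_1,…,P_m such that μ = Σ_k p_k P_k λ (Hardy–Littlewood–Pólya / Birkhoff). -/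
open Finset

lemma sortDesc_comp_eq {n : ℕ} (u : Fin n → ℝ) :
    ∃ e : Equiv.Perm (Fin n), ∀ i, sortDesc u i = u (e i) :=
  ⟨(Fin.revPerm).trans (Tuple.sort u), fun i => rfl⟩

lemma filter_sum_eq {n : ℕ} (h : Fin n → ℝ) (k : ℕ) :
    ∑ j ∈ range k, (if hj : j < n then h ⟨j, hj⟩ else 0)
      = ∑ i ∈ univ.filter (fun i : Fin n => (i : ℕ) < k), h i := by
  induction k with
  | zero => simp
  | succ k ih =>
    rw [Finset.sum_range_succ, ih]
    by_cases hk : k < n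
    · have he : univ.filter (fun i : Fin n => (i : ℕ) < k + 1)
          = insert ⟨k, hk⟩ (univ.filter (fun i : Fin n => (i : ℕ) < k)) := by
        ext i
        simp only [mem_filter, mem_univ, true_and, mem_insert, Fin.ext_iff]
        omega
      rw [he, Finset.sum_insert (by simp)]
      simp [hk]
      ring
    · have he : univ.filter (fun i : Fin n => (i : ℕ) < k + 1)
          = univ.filter (fun i : Fin n => (i : ℕ) < k) := by
        ext i
        simp only [mem_filter, mem_univ, true_and]
        omega
      rw [he]
      simp [hk]

lemma abel_ineq {n : ℕ} (f a b : Fin n → ℝ) (hf : Antitone f)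
    (hab : ∀ k : ℕ, ∑ i ∈ univ.filter (fun i : Fin n => (i : ℕ) < k), b i ≤
        ∑ i ∈ univ.filter (fun i : Fin n => (i : ℕ) < k), a i)
    (htot : ∑ i, a i = ∑ i, b i) :
    ∑ i, f i * b i ≤ ∑ i, f i * a i := by
  set F : ℕ → ℝ := fun j => if hj : j < n then f ⟨j, hj⟩ else 0 with hF
  set g : ℕ → ℝ := fun j => if hj : j < n then a ⟨j, hj⟩ - b ⟨j, hj⟩ else 0 with hg
  have hga : ∀ k : ℕ, ∑ j ∈ range k, g j
      = ∑ i ∈ univ.filter (fun i : Fin n => (i : ℕ) < k), (a i - b i) := by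
    intro k
    rw [← filter_sum_eq (fun i => a i - b i) k]
  have hGn : ∑ j ∈ range n, g j = 0 := by
    rw [hga]
    have : univ.filter (fun i : Fin n => (i : ℕ) < n) = univ := by
      ext i; simp [i.isLt]
    rw [this, Finset.sum_sub_distrib, htot, sub_self]
  have hGpos : ∀ k : ℕ, 0 ≤ ∑ j ∈ range k, g j := by
    intro k
    rw [hga, Finset.sum_sub_distrib, sub_nonneg]
    exact hab k
  have hparts := Finset.sum_range_by_parts F g n
  have hL : ∑ i ∈ range n, F i • g i = ∑ i : Fin n, f i * (a i - b i) := by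
    rw [Finset.sum_range fun j => F j • g j]
    apply Finset.sum_congr rfl
    intro i _
    simp [F, g, i.isLt]
  have key : (0:ℝ) ≤ ∑ i : Fin n, f i * (a i - b i) := by
    rw [← hL, hparts, hGn, smul_zero, zero_sub, neg_nonneg]
    apply Finset.sum_nonpos
    intro i hi
    rw [Finset.mem_range] at hi
    have hi1 : i + 1 < n := by omega
    have hFle : F (i + 1) - F i ≤ 0 := by
      have : F (i + 1) ≤ F i := by
        simp only [F, dif_pos hi1, dif_pos (by omega : i < n)]
        exact hf (by simp [Fin.le_def])
      linarith
    exact mul_nonpos_of_nonpos_of_nonneg hFle (hGpos (i + 1))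
  have expand : ∑ i : Fin n, f i * (a i - b i)
      = ∑ i : Fin n, f i * a i - ∑ i : Fin n, f i * b i := by
    simp [mul_sub, Finset.sum_sub_distrib]
  linarith [key]

lemma key_ineq {n : ℕ} (lam mu : Fin n → ℝ) (hmaj : Majorizes lam mu) (c : Fin n → ℝ) :
    ∃ σ : Equiv.Perm (Fin n), ∑ i, c i * mu i ≤ ∑ i, c i * lam (σ i) := by
  obtain ⟨ec, hec⟩ := sortDesc_comp_eq c
  obtain ⟨em, hem⟩ := sortDesc_comp_eq mu
  obtain ⟨el, hel⟩ := sortDesc_comp_eq lam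
  have hmono : Monovary (sortDesc c) (sortDesc mu) := by
    intro i j hij
    have hji : j ≤ i := by
      by_contra h
      exact absurd (sortDesc_antitone mu (le_of_not_ge h)) (not_le.mpr hij)
    exact sortDesc_antitone c hji
  -- Step 1: ∑ c i * mu i ≤ ∑ sortDesc c i * sortDesc mu i
  have step1 : ∑ i, c i * mu i ≤ ∑ i, sortDesc c i * sortDesc mu i := by
    have h1 : ∑ i, c i * mu i = ∑ i, sortDesc c i * sortDesc mu ((ec.trans em.symm) i) := by
      rw [← Equiv.sum_comp ec (fun i => c i * mu i)]
      apply Finset.sum_congr rfl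
      intro i _
      rw [hec]
      congr 1
      rw [hem]
      simp
    rw [h1]
    simpa only [smul_eq_mul] using
      hmono.sum_smul_comp_perm_le_sum_smul (σ := ec.trans em.symm)
  -- Step 2: Abel
  have step2 : ∑ i, sortDesc c i * sortDesc mu i ≤ ∑ i, sortDesc c i * sortDesc lam i := by
    apply abel_ineq _ _ _ (sortDesc_antitone c) hmaj.1
    · obtain ⟨h1, h2⟩ := hmaj
      calc ∑ i, sortDesc lam i = ∑ i, lam i := by
            rw [← Equiv.sum_comp el lam]; exact Finset.sum_congr rfl fun i _ => (hel i)
        _ = ∑ i, mu i := h2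
        _ = ∑ i, sortDesc mu i := by
            rw [← Equiv.sum_comp em mu]; exact Finset.sum_congr rfl fun i _ => (hem i).symm
  -- Step 3: realize as a permutation of lam
  refine ⟨ec.symm.trans el, ?_⟩
  have h3 : ∑ i, sortDesc c i * sortDesc lam i = ∑ i, c i * lam ((ec.symm.trans el) i) := by
    rw [← Equiv.sum_comp ec.symm (fun i => sortDesc c i * sortDesc lam i)]
    apply Finset.sum_congr rfl
    intro i _
    rw [hec, hel]
    simp
  linarith [step1, step2, h3.le, h3.ge]

lemma mem_hull {n : ℕ} (lam mu : Fin n → ℝ) (hmaj : Majorizes lam mu) :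
    mu ∈ convexHull ℝ (Set.range (fun σ : Equiv.Perm (Fin n) => fun i => lam (σ i))) := by
  set S : Set (Fin n → ℝ) := Set.range (fun σ : Equiv.Perm (Fin n) => fun i => lam (σ i)) with hS
  by_contra hmu
  have hfin : S.Finite := Set.finite_range _
  obtain ⟨f, u, hfa, hfu⟩ := geometric_hahn_banach_closed_point
    (convex_convexHull ℝ S) ((hfin.isCompact_convexHull ℝ).isClosed) hmu
  set c : Fin n → ℝ := fun i => f (fun j => if i = j then (1:ℝ) else 0) with hc
  have hfx : ∀ x : Fin n → ℝ, f x = ∑ i, c i * x i := by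
    intro x
    conv_lhs => rw [pi_eq_sum_univ x]
    rw [map_sum]
    apply Finset.sum_congr rfl
    intro i _
    rw [map_smul]
    simp [hc, mul_comm]
  obtain ⟨σ, hσ⟩ := key_ineq lam mu hmaj c
  have h1 : f (fun i => lam (σ i)) < u :=
    hfa _ (subset_convexHull ℝ S ⟨σ, rfl⟩)
  have h2 : u < f mu := hfu
  rw [hfx] at h1 h2
  linarith [hσ, h1, h2]

/-- Hardy–Littlewood–Pólya / Birkhoff: if `λ` majorizes `μ`, then `μ` is a convex
combination of permutations of `λ`. -/
theorem exists_convex_combination_of_permutations_of_majorizes {n : ℕ}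
    (lam mu : Fin n → ℝ) (hmaj : Majorizes lam mu) :
    ∃ (m : ℕ) (p : Fin m → ℝ) (P : Fin m → Equiv.Perm (Fin n)),
      (∀ k, 0 ≤ p k) ∧ (∑ k, p k = 1) ∧ ∀ i, mu i = ∑ k, p k * lam (P k i) := by
  have hmu := mem_hull lam mu hmaj
  rw [mem_convexHull_iff_exists_fintype] at hmu
  obtain ⟨ι, hι, w, z, hw0, hw1, hz, hsum⟩ := hmu
  choose σ hσ using hz
  let e := Fintype.equivFin ι
  refine ⟨Fintype.card ι, w ∘ e.symm, σ ∘ e.symm, fun k => hw0 _, ?_, ?_⟩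
  · rw [← hw1]
    exact Equiv.sum_comp e.symm w
  · intro i
    have h := congrFun hsum i
    rw [Finset.sum_apply] at h
    rw [← h, ← Equiv.sum_comp e.symm (fun k : ι => (w k • z k) i)]
    apply Finset.sum_congr rfl
    intro k _
    have hz' := congrFun (hσ (e.symm k)) i
    simp only [Function.comp_apply, Pi.smul_apply, smul_eq_mul]
    rw [← hz']
end
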